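/- arXiv:1409.3050 — 3 statements merged into one kernel-verified Lean document; each statement's English description precedes it below -/
import Mathlib

section
/- Binary helper example, converse direction: Let ρ ∈ [0,1/2], let X ~ Bernoulli(1/2) and Z ~ Bernoulli(ρ) be independent binary random variables, and let V := X ⊕ Z (modulo-2 addition). Let A be any finite-valued random variable such that the Markov chain X ↔ V ↔ A holds (i.e., A is conditionally independent of X given V). Then there exists α ∈ [0,1/2] such that H(X|A) = h(α ⋆ ρ) and I(V;A) ≥ 1 − h(α), where h is the binary entropy function and a ⋆ b := a(1−b) + (1−a)b. -/
open scoped Classical BigOperators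

/-- `p` is a probability mass function on the finite alphabet `α`. -/
def IsPMF {α : Type*} [Fintype α] (p : α → ℝ) : Prop :=
  (∀ a, 0 ≤ p a) ∧ ∑ a, p a = 1

/-- Pushforward of a pmf along a map. -/
noncomputable def pushPMF {α β : Type*} [Fintype α] (p : α → ℝ) (f : α → β) : β → ℝ :=
  fun b => ∑ a, if f a = b then p a else 0

/-- Shannon entropy (in bits) of a pmf. -/
noncomputable def ent {α : Type*} [Fintype α] (p : α → ℝ) : ℝ :=
  ∑ a, -(p a * Real.logb 2 (p a))

/-- Conditional entropy `H(A|B)` of a joint pmf on `α × β`. -/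
noncomputable def condEnt {α β : Type*} [Fintype α] [Fintype β] (p : α × β → ℝ) : ℝ :=
  ent p - ent (pushPMF p Prod.snd)

/-- Mutual information `I(A;B)` of a joint pmf on `α × β`. -/
noncomputable def mutInfo {α β : Type*} [Fintype α] [Fintype β] (p : α × β → ℝ) : ℝ :=
  ent (pushPMF p Prod.fst) + ent (pushPMF p Prod.snd) - ent p

/-- `B ↔ C ↔ D` is a Markov chain under the pmf `p` on `Ω`: `B` and `D` are conditionally
independent given `C`, i.e. `P(b,c,d)·P(c) = P(b,c)·P(c,d)` for all `b, c, d`. -/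
def MarkovChain {Ω β γ δ : Type*} [Fintype Ω] (p : Ω → ℝ)
    (B : Ω → β) (C : Ω → γ) (D : Ω → δ) : Prop :=
  ∀ (b : β) (c : γ) (d : δ),
    pushPMF p (fun ω => (B ω, C ω, D ω)) (b, c, d) * pushPMF p C c
      = pushPMF p (fun ω => (B ω, C ω)) (b, c) * pushPMF p (fun ω => (C ω, D ω)) (c, d)

/-- The binary entropy function (in bits); `Real.logb 2 0 = 0`, so `binEnt 0 = 0`. -/
noncomputable def binEnt (a : ℝ) : ℝ :=
  -(a * Real.logb 2 a) - (1 - a) * Real.logb 2 (1 - a)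

/-- Binary convolution `a ⋆ b := a(1−b) + (1−a)b`. -/
def binConv (a b : ℝ) : ℝ := a * (1 - b) + (1 - a) * b

/-- The `Bernoulli(t)` pmf on `Bool`. -/
def bern (t : ℝ) : Bool → ℝ := fun b => if b then t else 1 - t

section Analytic

open Real Set

/-- Padé inequality: `2(y-1)/(y+1) ≤ log y` for `y ≥ 1`. -/
lemma pade_log {y : ℝ} (hy : 1 ≤ y) : 2 * (y - 1) / (y + 1) ≤ Real.log y := by
  have key : MonotoneOn (fun y : ℝ => Real.log y - 2 * (y - 1) / (y + 1)) (Ici 1) := by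
    apply monotoneOn_of_deriv_nonneg (convex_Ici 1)
    · apply ContinuousOn.sub
      · exact Real.continuousOn_log.mono (fun x hx => by
          simp only [mem_compl_iff, mem_singleton_iff]
          intro h; rw [h] at hx; simp at hx; linarith)
      · apply ContinuousOn.div
        · fun_prop
        · fun_prop
        · intro x hx; simp at hx; intro h; linarith
    · intro x hx
      rw [interior_Ici] at hx
      simp only [mem_Ioi] at hx
      have hx0 : x ≠ 0 := by linarith
      have hx1 : x + 1 ≠ 0 := by linarith
      apply DifferentiableAt.differentiableWithinAt
      exact ((Real.differentiableAt_log hx0).sub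
        (((differentiableAt_const _).mul (differentiableAt_id.sub (differentiableAt_const _))).div
          (differentiableAt_id.add (differentiableAt_const _)) hx1))
    · intro x hx
      rw [interior_Ici] at hx
      simp only [mem_Ioi] at hx
      have hx0 : x ≠ 0 := by linarith
      have hxp : (0:ℝ) < x := by linarith
      have hx1 : x + 1 ≠ 0 := by linarith
      have hd : HasDerivAt (fun y : ℝ => Real.log y - 2 * (y - 1) / (y + 1))
          (x⁻¹ - (2 * (x + 1) - 2 * (x - 1) * 1) / (x + 1) ^ 2) x := by
        apply (Real.hasDerivAt_log hx0).sub
        have h1 : HasDerivAt (fun y : ℝ => 2 * (y - 1)) 2 x := by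
          simpa using ((hasDerivAt_id x).sub_const 1).const_mul 2
        have h2 : HasDerivAt (fun y : ℝ => y + 1) 1 x := by
          simpa using (hasDerivAt_id x).add_const 1
        exact h1.div h2 hx1
      rw [hd.deriv]
      rw [sub_nonneg, div_le_iff₀ (by positivity), inv_mul_eq_div, le_div_iff₀ hxp]
      nlinarith [sq_nonneg (x - 1)]
  have := key (by simp : (1:ℝ) ∈ Ici 1) (by exact hy) hy
  simp at this
  linarith

/-- Core scalar inequality: `(1-2t) ≤ (1-2t+2t²)·log((1-t)/t)` on `(0,1/2)`. -/
lemma key_scalar {t : ℝ} (ht0 : 0 < t) (ht2 : t < 1/2) :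
    1 - 2*t ≤ (1 - 2*t + 2*t^2) * (Real.log (1 - t) - Real.log t) := by
  have ht1 : t < 1 := by linarith
  have h1t : (0:ℝ) < 1 - t := by linarith
  set y : ℝ := ((1 - t)/t)^2 with hy
  have hyge : 1 ≤ y := by
    have : 1 ≤ (1 - t)/t := by rw [le_div_iff₀ ht0]; linarith
    nlinarith
  have hlog : Real.log y = 2 * (Real.log (1 - t) - Real.log t) := by
    rw [hy, Real.log_pow, Real.log_div (by linarith) (by linarith)]
    push_cast; ring
  have hpade := pade_log hyge
  rw [hlog] at hpade
  have hyval : 2 * (y - 1) / (y + 1) = 2 * (1 - 2*t) / (1 - 2*t + 2*t^2) := by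
    rw [hy]
    rw [div_eq_div_iff (by nlinarith) (by nlinarith)]
    field_simp
    ring
  rw [hyval] at hpade
  have hden : (0:ℝ) < 1 - 2*t + 2*t^2 := by nlinarith
  rw [div_le_iff₀ hden] at hpade
  linarith

noncomputable def Nfun (t : ℝ) : ℝ := t*(1-t)*(Real.log (1-t) - Real.log t)/(1-2*t)

lemma L_hasDeriv {t : ℝ} (ht0 : 0 < t) (ht1 : t < 1) :
    HasDerivAt (fun t => Real.log (1-t) - Real.log t) (-(1-t)⁻¹ - t⁻¹) t := by
  have htne : t ≠ 0 := ne_of_gt ht0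
  have h1tne : (1:ℝ) - t ≠ 0 := by intro h; apply absurd ht1; linarith [h];
  have a : HasDerivAt (fun t:ℝ => 1 - t) (-1) t := by
    simpa using (hasDerivAt_id t).const_sub 1
  have hl : HasDerivAt (fun t => Real.log (1 - t)) (-(1-t)⁻¹) t := by
    have := (Real.hasDerivAt_log h1tne).comp t a
    refine this.congr_deriv ?_
    ring
  exact hl.sub (Real.hasDerivAt_log htne)

lemma N_hasDeriv {t : ℝ} (ht0 : 0 < t) (ht2 : t < 1/2) :
    HasDerivAt Nfun
      (((1 - 2*t + 2*t^2) * (Real.log (1-t) - Real.log t) - (1-2*t))/(1-2*t)^2) t := by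
  have htne : t ≠ 0 := ne_of_gt ht0
  have h1tne : (1:ℝ) - t ≠ 0 := by intro h; nlinarith
  have h12ne : (1:ℝ) - 2*t ≠ 0 := by intro h; nlinarith
  have hquad : HasDerivAt (fun t:ℝ => t*(1-t)) (1-2*t) t := by
    have a : HasDerivAt (fun t:ℝ => 1 - t) (-1) t := by
      simpa using (hasDerivAt_id t).const_sub 1
    have := (hasDerivAt_id t).mul a
    refine this.congr_deriv ?_
    simp [id]
    ring
  have hu := hquad.mul (L_hasDeriv ht0 (by linarith))
  have hden : HasDerivAt (fun t:ℝ => 1-2*t) (-2) t := by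
    simpa using ((hasDerivAt_id t).const_mul 2).const_sub 1
  have := hu.div hden h12ne
  refine this.congr_deriv ?_
  simp only [Pi.mul_apply]
  field_simp
  ring

lemma N_mono : MonotoneOn Nfun (Ioo 0 (1/2 : ℝ)) := by
  apply monotoneOn_of_deriv_nonneg (convex_Ioo _ _)
  · intro x hx
    exact ((N_hasDeriv hx.1 hx.2).differentiableAt.continuousAt).continuousWithinAt
  · rw [interior_Ioo]
    intro x hx
    exact ((N_hasDeriv hx.1 hx.2).differentiableAt).differentiableWithinAt
  · rw [interior_Ioo]
    intro x hx
    rw [(N_hasDeriv hx.1 hx.2).deriv]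
    have h1 := key_scalar hx.1 hx.2
    have h2 : (0:ℝ) < (1-2*x)^2 := by nlinarith [hx.2]
    apply div_nonneg (by linarith) (le_of_lt h2)

lemma L_pos {t : ℝ} (ht0 : 0 < t) (ht2 : t < 1/2) : 0 < Real.log (1-t) - Real.log t := by
  have := Real.log_lt_log ht0 (by linarith : t < 1 - t)
  linarith

lemma conv_mem {ρ t : ℝ} (hρ0 : 0 ≤ ρ) (hρ2 : ρ < 1/2) (ht : t ∈ Ioo (0:ℝ) (1/2)) :
    binConv t ρ ∈ Ioo (0:ℝ) (1/2) ∧ t ≤ binConv t ρ := by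
  obtain ⟨ht0, ht2⟩ := ht
  unfold binConv
  constructor
  · constructor <;> nlinarith
  · nlinarith

/-- `G ρ` -/
noncomputable def Gfun (ρ t : ℝ) : ℝ :=
  (Real.log (1 - binConv t ρ) - Real.log (binConv t ρ)) / (Real.log (1-t) - Real.log t)

lemma conv_hasDeriv (ρ : ℝ) {t : ℝ} :
    HasDerivAt (fun t => binConv t ρ) (1 - 2*ρ) t := by
  unfold binConv
  have h1 : HasDerivAt (fun t:ℝ => t * (1-ρ)) (1-ρ) t := by
    simpa using (hasDerivAt_id t).mul_const (1-ρ)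
  have h2 : HasDerivAt (fun t:ℝ => (1-t) * ρ) (-ρ) t := by
    have a : HasDerivAt (fun t:ℝ => 1 - t) (-1) t := by
      simpa using (hasDerivAt_id t).const_sub 1
    simpa using a.mul_const ρ
  have := h1.add h2
  refine this.congr_deriv ?_
  ring

lemma G_hasDeriv {ρ t : ℝ} (hρ0 : 0 ≤ ρ) (hρ2 : ρ < 1/2) (ht : t ∈ Ioo (0:ℝ) (1/2)) :
    HasDerivAt (Gfun ρ)
      (((1-2*ρ) * (-(1 - binConv t ρ)⁻¹ - (binConv t ρ)⁻¹) * (Real.log (1-t) - Real.log t)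
        - (Real.log (1 - binConv t ρ) - Real.log (binConv t ρ)) * (-(1-t)⁻¹ - t⁻¹))
        / (Real.log (1-t) - Real.log t)^2) t := by
  obtain ⟨hu, _⟩ := conv_mem hρ0 hρ2 ht
  have hnum : HasDerivAt (fun t => Real.log (1 - binConv t ρ) - Real.log (binConv t ρ))
      ((1-2*ρ) * (-(1 - binConv t ρ)⁻¹ - (binConv t ρ)⁻¹)) t := by
    have := (L_hasDeriv hu.1 (by linarith [hu.2] : binConv t ρ < 1)).comp t (conv_hasDeriv ρ)
    refine this.congr_deriv ?_
    ring
  have hLd := L_hasDeriv ht.1 (by linarith [ht.2] : t < 1)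
  have hLne : Real.log (1-t) - Real.log t ≠ 0 := ne_of_gt (L_pos ht.1 ht.2)
  exact hnum.div hLd hLne

lemma G_mono {ρ : ℝ} (hρ0 : 0 ≤ ρ) (hρ2 : ρ < 1/2) :
    MonotoneOn (Gfun ρ) (Ioo 0 (1/2 : ℝ)) := by
  apply monotoneOn_of_deriv_nonneg (convex_Ioo _ _)
  · intro x hx
    exact ((G_hasDeriv hρ0 hρ2 hx).differentiableAt.continuousAt).continuousWithinAt
  · rw [interior_Ioo]
    intro x hx
    exact ((G_hasDeriv hρ0 hρ2 hx).differentiableAt).differentiableWithinAt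
  · rw [interior_Ioo]
    intro x hx
    rw [(G_hasDeriv hρ0 hρ2 hx).deriv]
    obtain ⟨hu, hxu⟩ := conv_mem hρ0 hρ2 hx
    have hx0 := hx.1
    have hx2 := hx.2
    set u := binConv x ρ with hudef
    have huval : 1 - 2*u = (1-2*ρ)*(1-2*x) := by rw [hudef]; unfold binConv; ring
    clear_value u
    obtain ⟨hu0, hu2⟩ := hu
    have hLx := L_pos hx0 hx2
    have hLu := L_pos hu0 hu2
    have hN := N_mono hx ⟨hu0, hu2⟩ hxu
    unfold Nfun at hN
    rw [div_le_div_iff₀ (by linarith) (by linarith)] at hN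
    rw [huval] at hN
    have hkey : (1-2*ρ) * (x*(1-x)*(Real.log (1-x) - Real.log x))
        ≤ u*(1-u)*(Real.log (1-u) - Real.log u) := by
      have h12x : (0:ℝ) < 1 - 2*x := by linarith
      nlinarith [hN]
    apply div_nonneg _ (sq_nonneg _)
    have hne1 : u ≠ 0 := ne_of_gt hu0
    have hne2 : (1:ℝ) - u ≠ 0 := by intro h; nlinarith
    have hne3 : x ≠ 0 := ne_of_gt hx0
    have hne4 : (1:ℝ) - x ≠ 0 := by intro h; nlinarith
    have e : (1-2*ρ)*(-(1-u)⁻¹ - u⁻¹)*(Real.log (1-x) - Real.log x)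
          - (Real.log (1-u) - Real.log u)*(-(1-x)⁻¹-x⁻¹)
        = ((u*(1-u))*(Real.log (1-u) - Real.log u)
            - (1-2*ρ)*((x*(1-x))*(Real.log (1-x) - Real.log x)))
          / (u*(1-u)*(x*(1-x))) := by
      field_simp
      ring
    rw [e]
    exact div_nonneg (by nlinarith [hkey])
      (le_of_lt (mul_pos (mul_pos hu0 (by linarith)) (mul_pos hx0 (by linarith))))

lemma conv_one_sub (t ρ : ℝ) : binConv (1-t) ρ = 1 - binConv t ρ := by unfold binConv; ring

lemma Phi_hasDeriv {ρ c t : ℝ} (hρ0 : 0 ≤ ρ) (hρ2 : ρ < 1/2) (ht : t ∈ Ioo (0:ℝ) (1/2)) :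
    HasDerivAt (fun t => binEntropy (binConv t ρ) - c * binEntropy t)
      ((1-2*ρ) * (Real.log (1 - binConv t ρ) - Real.log (binConv t ρ))
        - c * (Real.log (1-t) - Real.log t)) t := by
  obtain ⟨⟨hu0, hu2⟩, -⟩ := conv_mem hρ0 hρ2 ht
  have h1 : HasDerivAt (fun t => binEntropy (binConv t ρ))
      ((1-2*ρ) * (Real.log (1 - binConv t ρ) - Real.log (binConv t ρ))) t := by
    have := (hasDerivAt_binEntropy (ne_of_gt hu0) (by intro h; rw [h] at hu2; norm_num at hu2)).comp
      t (conv_hasDeriv ρ)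
    refine this.congr_deriv ?_
    ring
  have h2 : HasDerivAt (fun t => c * binEntropy t)
      (c * (Real.log (1-t) - Real.log t)) t :=
    (hasDerivAt_binEntropy (ne_of_gt ht.1)
      (by intro h; subst h; exact absurd ht.2 (by norm_num))).const_mul c
  exact h1.sub h2

/-- Tangent line inequality for Mrs. Gerber's lemma. -/
lemma tangent_line {ρ α : ℝ} (hρ0 : 0 ≤ ρ) (hρ2 : ρ < 1/2) (hα0 : 0 < α) (hα2 : α < 1/2)
    {t : ℝ} (ht : t ∈ Icc (0:ℝ) 1) :
    binEntropy (binConv α ρ)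
      + ((1-2*ρ) * (Real.log (1 - binConv α ρ) - Real.log (binConv α ρ))
          / (Real.log (1-α) - Real.log α)) * (binEntropy t - binEntropy α)
      ≤ binEntropy (binConv t ρ) := by
  obtain ⟨⟨huα0, huα2⟩, -⟩ := conv_mem hρ0 hρ2 ⟨hα0, hα2⟩
  have hLα := L_pos hα0 hα2
  have hLuα := L_pos huα0 huα2
  set c : ℝ := (1-2*ρ) * (Real.log (1 - binConv α ρ) - Real.log (binConv α ρ))
      / (Real.log (1-α) - Real.log α) with hc
  set Φ : ℝ → ℝ := fun t => binEntropy (binConv t ρ) - c * binEntropy t with hΦ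
  have hcont : Continuous Φ := by
    apply Continuous.sub
    · exact binEntropy_continuous.comp (by unfold binConv; fun_prop)
    · exact continuous_const.mul binEntropy_continuous
  have derivsign : ∀ x ∈ Ioo (0:ℝ) (1/2),
      deriv Φ x = (1-2*ρ) * (Real.log (1 - binConv x ρ) - Real.log (binConv x ρ))
        - c * (Real.log (1-x) - Real.log x) := fun x hx => (Phi_hasDeriv hρ0 hρ2 hx).deriv
  have signclaim : ∀ x ∈ Ioo (0:ℝ) (1/2),
      ((x ≤ α → deriv Φ x ≤ 0) ∧ (α ≤ x → 0 ≤ deriv Φ x)) := by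
    intro x hx
    obtain ⟨⟨hux0, hux2⟩, -⟩ := conv_mem hρ0 hρ2 hx
    have hLx := L_pos hx.1 hx.2
    rw [derivsign x hx]
    have hcross_iff : ∀ y z : ℝ, y ∈ Ioo (0:ℝ) (1/2) → z ∈ Ioo (0:ℝ) (1/2) → y ≤ z →
        (Real.log (1 - binConv y ρ) - Real.log (binConv y ρ)) * (Real.log (1-z) - Real.log z)
          ≤ (Real.log (1 - binConv z ρ) - Real.log (binConv z ρ)) * (Real.log (1-y) - Real.log y) := by
      intro y z hy hz hyz
      have := G_mono hρ0 hρ2 hy hz hyz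
      unfold Gfun at this
      rw [div_le_div_iff₀ (L_pos hy.1 hy.2) (L_pos hz.1 hz.2)] at this
      linarith
    constructor
    · intro hxα
      have hcr := hcross_iff x α hx ⟨hα0, hα2⟩ hxα
      rw [sub_nonpos, hc, div_mul_eq_mul_div, le_div_iff₀ hLα]
      nlinarith [mul_le_mul_of_nonneg_left hcr (by linarith : (0:ℝ) ≤ 1-2*ρ)]
    · intro hαx
      have hcr := hcross_iff α x ⟨hα0, hα2⟩ hx hαx
      rw [sub_nonneg, hc, div_mul_eq_mul_div, div_le_iff₀ hLα]
      nlinarith [mul_le_mul_of_nonneg_left hcr (by linarith : (0:ℝ) ≤ 1-2*ρ)]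
  have key : ∀ s ∈ Icc (0:ℝ) (1/2), Φ α ≤ Φ s := by
    intro s hs
    rcases le_total s α with hsα | hαs
    · have hanti : AntitoneOn Φ (Icc 0 α) := by
        apply antitoneOn_of_deriv_nonpos (convex_Icc _ _) hcont.continuousOn
        · rw [interior_Icc]
          intro x hx
          exact ((Phi_hasDeriv (c := c) hρ0 hρ2 ⟨hx.1, lt_trans hx.2 hα2⟩).differentiableAt).differentiableWithinAt
        · rw [interior_Icc]
          intro x hx
          exact ((signclaim x ⟨hx.1, lt_trans hx.2 hα2⟩).1 (le_of_lt hx.2))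
      exact hanti ⟨hs.1, hsα⟩ ⟨le_of_lt hα0, le_refl α⟩ hsα
    · have hmono : MonotoneOn Φ (Icc α (1/2)) := by
        apply monotoneOn_of_deriv_nonneg (convex_Icc _ _) hcont.continuousOn
        · rw [interior_Icc]
          intro x hx
          exact ((Phi_hasDeriv (c := c) hρ0 hρ2 ⟨lt_trans hα0 hx.1, hx.2⟩).differentiableAt).differentiableWithinAt
        · rw [interior_Icc]
          intro x hx
          exact ((signclaim x ⟨lt_trans hα0 hx.1, hx.2⟩).2 (le_of_lt hx.1))
      exact hmono ⟨le_refl α, le_of_lt hα2⟩ ⟨hαs, hs.2⟩ hαs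
  rcases le_or_gt t (1/2) with h | h
  · have := key t ⟨ht.1, h⟩
    simp only [hΦ] at this
    rw [mul_sub]
    linarith
  · have := key (1-t) ⟨by linarith [ht.2], by linarith⟩
    simp only [hΦ, conv_one_sub, binEntropy_one_sub] at this
    rw [mul_sub]
    linarith

/-- entropy of convolution is at least `binEntropy ρ`. -/
lemma conv_entropy_lb {ρ b : ℝ} (hρ0 : 0 ≤ ρ) (hρ2 : ρ ≤ 1/2) (hb : b ∈ Icc (0:ℝ) 1) :
    binEntropy ρ ≤ binEntropy (binConv b ρ) := by
  obtain ⟨hb0, hb1⟩ := hb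
  set u := binConv b ρ with hu
  have hmem : ρ ≤ u ∧ u ≤ 1 - ρ := by rw [hu]; unfold binConv; constructor <;> nlinarith
  have hmono := binEntropy_strictMonoOn.monotoneOn
  rcases le_or_gt u (1/2) with h | h
  · exact hmono ⟨hρ0, by norm_num; linarith⟩ ⟨by linarith, by norm_num; linarith⟩ hmem.1
  · rw [← binEntropy_one_sub u]
    exact hmono ⟨hρ0, by norm_num; linarith⟩ ⟨by linarith, by norm_num; linarith⟩
      (by linarith [hmem.2])

/-- if entropy of convolution equals `binEntropy ρ` with `ρ < 1/2` then `b ∈ {0,1}`. -/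
lemma conv_entropy_eq {ρ b : ℝ} (hρ0 : 0 ≤ ρ) (hρ2 : ρ < 1/2) (hb : b ∈ Icc (0:ℝ) 1)
    (h : binEntropy (binConv b ρ) = binEntropy ρ) : binEntropy b = 0 := by
  obtain ⟨hb0, hb1⟩ := hb
  set u := binConv b ρ with hu
  have hmem : ρ ≤ u ∧ u ≤ 1 - ρ := by rw [hu]; unfold binConv; constructor <;> nlinarith
  have hinj := binEntropy_strictMonoOn.injOn
  rcases le_or_gt u (1/2) with hc | hc
  · have : u = ρ := by
      apply hinj ⟨by linarith, by norm_num; linarith⟩ ⟨hρ0, by norm_num; linarith⟩ h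
    have hb0' : b = 0 := by rw [hu] at this; unfold binConv at this; nlinarith
    rw [hb0']; simp
  · have h1u : binEntropy (1 - u) = binEntropy ρ := by rw [binEntropy_one_sub]; exact h
    have : 1 - u = ρ := by
      apply hinj ⟨by linarith [hmem.2], by norm_num; linarith⟩ ⟨hρ0, by norm_num; linarith⟩ h1u
    have hb1' : b = 1 := by rw [hu] at this; unfold binConv at this; nlinarith
    rw [hb1']; simp

/-- Mrs. Gerber's lemma, Jensen/sum form. -/
lemma mgl_sum {𝒜 : Type} [Fintype 𝒜] {ρ α : ℝ} (hρ0 : 0 ≤ ρ) (hρ2 : ρ < 1/2)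
    (hα0 : 0 ≤ α) (hα2 : α ≤ 1/2) (q β : 𝒜 → ℝ) (hq0 : ∀ a, 0 ≤ q a) (hq1 : ∑ a, q a = 1)
    (hβ : ∀ a, β a ∈ Icc (0:ℝ) 1)
    (heq : ∑ a, q a * binEntropy (binConv (β a) ρ) = binEntropy (binConv α ρ)) :
    ∑ a, q a * binEntropy (β a) ≤ binEntropy α := by
  rcases eq_or_lt_of_le hα2 with hhalf | hα2'
  · have : binEntropy α = Real.log 2 := by
      rw [hhalf, show (1/2:ℝ) = 2⁻¹ by norm_num, binEntropy_two_inv]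
    rw [this]
    calc ∑ a, q a * binEntropy (β a) ≤ ∑ a, q a * Real.log 2 := by
          apply Finset.sum_le_sum
          intro a _
          exact mul_le_mul_of_nonneg_left binEntropy_le_log_two (hq0 a)
      _ = Real.log 2 := by rw [← Finset.sum_mul, hq1, one_mul]
  rcases eq_or_lt_of_le hα0 with hzero | hα0'
  · have hα : α = 0 := hzero.symm
    subst hα
    have hconv0 : binConv 0 ρ = ρ := by unfold binConv; ring
    rw [hconv0] at heq
    have hterm0 : ∀ a ∈ Finset.univ, (0:ℝ) ≤ q a * (binEntropy (binConv (β a) ρ) - binEntropy ρ) :=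
      fun a _ => mul_nonneg (hq0 a) (by linarith [conv_entropy_lb hρ0 (le_of_lt hρ2) (hβ a)])
    have hsum0 : ∑ a, q a * (binEntropy (binConv (β a) ρ) - binEntropy ρ) = 0 := by
      simp only [mul_sub]
      rw [Finset.sum_sub_distrib, ← Finset.sum_mul, hq1, heq]
      ring
    have := (Finset.sum_eq_zero_iff_of_nonneg hterm0).mp hsum0
    have hgoal : ∑ a, q a * binEntropy (β a) = 0 := by
      apply Finset.sum_eq_zero
      intro a _
      rcases eq_or_lt_of_le (hq0 a) with hq | hq
      · rw [← hq]; ring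
      · have h0 := this a (Finset.mem_univ a)
        have : binEntropy (binConv (β a) ρ) = binEntropy ρ := by
          rcases mul_eq_zero.mp h0 with h | h
          · exact absurd h.symm (ne_of_lt hq)
          · linarith
        rw [conv_entropy_eq hρ0 hρ2 (hβ a) this]; ring
    rw [hgoal]
    simp
  · set c : ℝ := (1-2*ρ) * (Real.log (1 - binConv α ρ) - Real.log (binConv α ρ))
        / (Real.log (1-α) - Real.log α) with hc
    obtain ⟨⟨huα0, huα2⟩, -⟩ := conv_mem hρ0 hρ2 ⟨hα0', hα2'⟩
    have hcpos : 0 < c := by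
      rw [hc]
      apply div_pos (mul_pos (by linarith) (L_pos huα0 huα2)) (L_pos hα0' hα2')
    have hsumle : binEntropy (binConv α ρ) + c * (∑ a, q a * binEntropy (β a) - binEntropy α)
        ≤ binEntropy (binConv α ρ) := by
      have hper : ∀ a ∈ Finset.univ,
          q a * (binEntropy (binConv α ρ) + c * (binEntropy (β a) - binEntropy α))
            ≤ q a * binEntropy (binConv (β a) ρ) :=
        fun a _ => mul_le_mul_of_nonneg_left (tangent_line hρ0 hρ2 hα0' hα2' (hβ a)) (hq0 a)
      have hs := Finset.sum_le_sum hper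
      rw [heq] at hs
      calc binEntropy (binConv α ρ) + c * (∑ a, q a * binEntropy (β a) - binEntropy α)
          = ∑ a, q a * (binEntropy (binConv α ρ) + c * (binEntropy (β a) - binEntropy α)) := by
            have : ∀ a, q a * (binEntropy (binConv α ρ) + c * (binEntropy (β a) - binEntropy α))
                = binEntropy (binConv α ρ) * q a + c * (q a * binEntropy (β a))
                  - (c * binEntropy α) * q a := fun a => by ring
            rw [Finset.sum_congr rfl (fun a _ => this a)]
            rw [Finset.sum_sub_distrib, Finset.sum_add_distrib, ← Finset.mul_sum,
              ← Finset.mul_sum, ← Finset.mul_sum, hq1]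
            ring
        _ ≤ binEntropy (binConv α ρ) := hs
    nlinarith [hsumle, hcpos]

end Analytic

section PMFLayer

open Real Set

lemma pushPMF_apply {α β : Type*} [Fintype α] (p : α → ℝ) (f : α → β) (b : β) :
    pushPMF p f b = ∑ a, if f a = b then p a else 0 := rfl

lemma pushPMF_comp {α β γ : Type*} [Fintype α] [Fintype β] (p : α → ℝ) (f : α → β) (g : β → γ) :
    pushPMF (pushPMF p f) g = pushPMF p (fun a => g (f a)) := by
  funext c
  unfold pushPMF
  calc (∑ b, if g b = c then ∑ a, if f a = b then p a else 0 else 0)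
      = ∑ b, ∑ a, if f a = b then (if g b = c then p a else 0) else 0 := by
        apply Finset.sum_congr rfl
        intro b _
        split_ifs with h
        · apply Finset.sum_congr rfl
          intro a _
          split_ifs <;> simp [h]
        · simp [h]
    _ = ∑ a, ∑ b, if f a = b then (if g b = c then p a else 0) else 0 := Finset.sum_comm
    _ = ∑ a, if g (f a) = c then p a else 0 := by
        apply Finset.sum_congr rfl
        intro a _
        rw [Finset.sum_ite_eq]
        simp

lemma pushPMF_nonneg {α β : Type*} [Fintype α] {p : α → ℝ} (hp : ∀ a, 0 ≤ p a) (f : α → β)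
    (b : β) : 0 ≤ pushPMF p f b := by
  unfold pushPMF
  apply Finset.sum_nonneg
  intro a _
  by_cases h : f a = b <;> simp [h, hp a]

lemma pushPMF_sum {α β : Type*} [Fintype α] [Fintype β] (p : α → ℝ) (f : α → β) :
    ∑ b, pushPMF p f b = ∑ a, p a := by
  unfold pushPMF
  rw [Finset.sum_comm]
  apply Finset.sum_congr rfl
  intro a _
  simp

/-- binEnt in terms of binEntropy -/
lemma binEnt_eq (a : ℝ) : binEnt a = binEntropy a / Real.log 2 := by
  unfold binEnt binEntropy Real.logb
  rw [Real.log_inv, Real.log_inv]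
  ring

/-- key per-`a` chain rule identity. -/
lemma pair_ent (mf mt : ℝ) (hf : 0 ≤ mf) (ht : 0 ≤ mt) :
    -(mf * Real.logb 2 mf) + -(mt * Real.logb 2 mt) + (mf + mt) * Real.logb 2 (mf + mt)
      = (mf + mt) * binEnt (mt / (mf + mt)) := by
  rcases eq_or_lt_of_le (add_nonneg hf ht) with hq | hq
  · have h1 : mf = 0 := by linarith
    have h2 : mt = 0 := by linarith
    simp [h1, h2]
  · set s := mf + mt with hs
    have hsne : s ≠ 0 := ne_of_gt hq
    have hmf : mf = s * (1 - mt / s) := by field_simp; linarith [hs]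
    have e1 : ∀ x : ℝ, 0 ≤ x → (s * x) * Real.logb 2 (s * x)
        = (s * x) * Real.logb 2 s + s * (x * Real.logb 2 x) := by
      intro x hx
      rcases eq_or_lt_of_le hx with h | h
      · simp [← h]
      · rw [Real.logb_mul hsne (ne_of_gt h)]; ring
    have hmtdiv : mt = s * (mt / s) := by field_simp
    have hdiv0 : 0 ≤ mt / s := div_nonneg ht (le_of_lt hq)
    have hdiv1 : 0 ≤ 1 - mt / s := by
      rw [sub_nonneg, div_le_one hq]; linarith
    calc -(mf * Real.logb 2 mf) + -(mt * Real.logb 2 mt) + s * Real.logb 2 s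
        = -((s * (1 - mt/s)) * Real.logb 2 (s * (1 - mt/s)))
          + -((s * (mt/s)) * Real.logb 2 (s * (mt/s))) + s * Real.logb 2 s := by
          rw [← hmf, ← hmtdiv]
      _ = -((s * (1 - mt/s)) * Real.logb 2 s + s * ((1 - mt/s) * Real.logb 2 (1 - mt/s)))
          + -((s * (mt/s)) * Real.logb 2 s + s * ((mt/s) * Real.logb 2 (mt/s)))
          + s * Real.logb 2 s := by
          rw [e1 _ hdiv1, e1 _ hdiv0]
      _ = s * binEnt (mt / s) := by
          unfold binEnt
          have : s * (1 - mt/s) + s * (mt/s) = s := by field_simp; ring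
          nlinarith [this]
      _ = (mf + mt) * binEnt (mt / (mf + mt)) := by rw [← hs]

/-- chain rule: conditional entropy as average of binary entropies of rows. -/
lemma cond_ent_rows {𝒜 : Type*} [Fintype 𝒜] (m : Bool × 𝒜 → ℝ) (hm : ∀ x, 0 ≤ m x) :
    ent m - ent (pushPMF m Prod.snd)
      = ∑ a, (m (false, a) + m (true, a)) * binEnt (m (true, a) / (m (false, a) + m (true, a))) := by
  have hsnd : ∀ a, pushPMF m Prod.snd a = m (false, a) + m (true, a) := by
    intro a
    unfold pushPMF
    rw [Fintype.sum_prod_type, Fintype.sum_bool]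
    simp only [Prod.snd]
    rw [Finset.sum_ite_eq', Finset.sum_ite_eq']
    simp
    ring
  have hentm : ent m = ∑ a, (-(m (false, a) * Real.logb 2 (m (false, a)))
      + -(m (true, a) * Real.logb 2 (m (true, a)))) := by
    unfold ent
    rw [Fintype.sum_prod_type]
    rw [Fintype.sum_bool]
    rw [← Finset.sum_add_distrib]
    apply Finset.sum_congr rfl
    intro a _
    ring
  have hent2 : ent (pushPMF m Prod.snd)
      = ∑ a, -((m (false,a) + m (true,a)) * Real.logb 2 (m (false,a) + m (true,a))) := by
    unfold ent
    apply Finset.sum_congr rfl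
    intro a _
    rw [hsnd a]
  rw [hentm, hent2, ← Finset.sum_sub_distrib]
  apply Finset.sum_congr rfl
  intro a _
  have := pair_ent (m (false, a)) (m (true, a)) (hm _) (hm _)
  linarith

lemma push_snd_bool {𝒜 : Type*} [Fintype 𝒜] (m : Bool × 𝒜 → ℝ) (a : 𝒜) :
    pushPMF m Prod.snd a = m (false, a) + m (true, a) := by
  unfold pushPMF
  rw [Fintype.sum_prod_type, Fintype.sum_bool]
  simp only [Prod.snd]
  rw [Finset.sum_ite_eq', Finset.sum_ite_eq']
  simp
  ring

lemma sum13 {𝒜 : Type*} [Fintype 𝒜] (T : Bool × Bool × 𝒜 → ℝ) (x : Bool) (a : 𝒜) :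
    pushPMF T (fun w => (w.1, w.2.2)) (x, a) = T (x, false, a) + T (x, true, a) := by
  unfold pushPMF
  rw [Fintype.sum_prod_type, Fintype.sum_bool]
  rw [Fintype.sum_prod_type, Fintype.sum_bool, Fintype.sum_prod_type, Fintype.sum_bool]
  simp [Prod.ext_iff, Finset.sum_ite_eq']
  rcases x <;> simp <;> ring

lemma binEnt_le_one {b : ℝ} : binEnt b ≤ 1 := by
  rw [binEnt_eq]
  have h2 : (0:ℝ) < Real.log 2 := Real.log_pos (by norm_num)
  rw [div_le_one h2]
  exact binEntropy_le_log_two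

end PMFLayer

section MainProof
open Real

/-- binary helper example, converse direction: let `ρ ∈ [0,1/2]`,
`X ∼ Bern(1/2)` and `Z ∼ Bern(ρ)` independent, `V := X ⊕ Z`, and let `A` be any
finite-valued random variable with the Markov chain `X ↔ V ↔ A`. Here the joint pmf `p`
is on `(Bool × Bool) × 𝒜`, the first two coordinates being `(X, Z)`. Then there is an
`α ∈ [0,1/2]` with `H(X|A) = h(α ⋆ ρ)` and `I(V;A) ≥ 1 − h(α)`. -/
theorem binary_helper_converse
    {𝒜 : Type} [Fintype 𝒜]
    (ρ : ℝ) (hρ0 : 0 ≤ ρ) (hρ2 : ρ ≤ 1 / 2)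
    (p : (Bool × Bool) × 𝒜 → ℝ) (hp : IsPMF p)
    (hmarg : ∀ x z : Bool, pushPMF p Prod.fst (x, z) = (1 / 2) * bern ρ z)
    (hmc : MarkovChain p (fun w => w.1.1) (fun w => xor w.1.1 w.1.2) (fun w => w.2)) :
    ∃ α : ℝ, 0 ≤ α ∧ α ≤ 1 / 2 ∧
      condEnt (pushPMF p (fun w => (w.1.1, w.2))) = binEnt (binConv α ρ) ∧
      1 - binEnt α ≤ mutInfo (pushPMF p (fun w => (xor w.1.1 w.1.2, w.2))) := by
  classical
  obtain ⟨hp0, hp1⟩ := hp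
  set q : 𝒜 → ℝ := pushPMF p Prod.snd with hqdef
  set r : Bool × 𝒜 → ℝ := pushPMF p (fun w => (xor w.1.1 w.1.2, w.2)) with hrdef
  set s : Bool × 𝒜 → ℝ := pushPMF p (fun w => (w.1.1, w.2)) with hsdef
  set T : Bool × Bool × 𝒜 → ℝ := pushPMF p (fun w => (w.1.1, xor w.1.1 w.1.2, w.2)) with hTdef
  have hq0 : ∀ a, 0 ≤ q a := fun a => pushPMF_nonneg hp0 _ a
  have hr0 : ∀ y, 0 ≤ r y := fun y => pushPMF_nonneg hp0 _ y
  have hs0 : ∀ y, 0 ≤ s y := fun y => pushPMF_nonneg hp0 _ y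
  -- V marginal
  have hV : ∀ v, pushPMF p (fun w => xor w.1.1 w.1.2) v = 1/2 := by
    intro v
    have h : pushPMF p (fun w => xor w.1.1 w.1.2)
        = pushPMF (pushPMF p Prod.fst) (fun xz => xor xz.1 xz.2) :=
      (pushPMF_comp p Prod.fst (fun xz => xor xz.1 xz.2)).symm
    rw [h]
    rw [pushPMF_apply]
    rw [Fintype.sum_prod_type, Fintype.sum_bool, Fintype.sum_bool, Fintype.sum_bool]
    rw [hmarg, hmarg, hmarg, hmarg]
    rcases v <;> simp [bern] <;> ring
  have hXV : ∀ x v, pushPMF p (fun w => (w.1.1, xor w.1.1 w.1.2)) (x, v)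
      = 1/2 * bern ρ (xor x v) := by
    intro x v
    have h : pushPMF p (fun w => (w.1.1, xor w.1.1 w.1.2))
        = pushPMF (pushPMF p Prod.fst) (fun xz => (xz.1, xor xz.1 xz.2)) :=
      (pushPMF_comp p Prod.fst (fun xz => (xz.1, xor xz.1 xz.2))).symm
    rw [h]
    rw [pushPMF_apply]
    rw [Fintype.sum_prod_type, Fintype.sum_bool, Fintype.sum_bool, Fintype.sum_bool]
    rw [hmarg, hmarg, hmarg, hmarg]
    rcases x <;> rcases v <;> simp [bern, Prod.ext_iff]
  -- Markov chain consequence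
  have hT : ∀ x v a, T (x, v, a) = bern ρ (xor x v) * r (v, a) := by
    intro x v a
    have h := hmc x v a
    beta_reduce at h
    rw [hV, hXV] at h
    rw [← hrdef, ← hTdef] at h
    have : (1/2 : ℝ) ≠ 0 := by norm_num
    field_simp at h
    linarith
  -- rows of s
  have hs_eval : ∀ x a, s (x, a)
      = bern ρ (xor x false) * r (false, a) + bern ρ (xor x true) * r (true, a) := by
    intro x a
    have hcomp : s = pushPMF T (fun w => (w.1, w.2.2)) := by
      rw [hTdef, pushPMF_comp]
    rw [hcomp, sum13, hT, hT]
  have hq_eval : ∀ a, q a = r (false, a) + r (true, a) := by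
    intro a
    have hcomp : q = pushPMF r Prod.snd := by
      rw [hrdef, pushPMF_comp]
    rw [hcomp, push_snd_bool]
  have hq_eval' : ∀ a, q a = s (false, a) + s (true, a) := by
    intro a
    rw [hs_eval, hs_eval, hq_eval]
    simp [bern]
    ring
  have hrV : ∀ v, pushPMF r Prod.fst v = 1/2 := by
    intro v
    have hcomp : pushPMF r Prod.fst = pushPMF p (fun w => xor w.1.1 w.1.2) := by
      rw [hrdef, pushPMF_comp]
    rw [hcomp, hV]
  have hqsum : ∑ a, q a = 1 := by rw [hqdef, pushPMF_sum, hp1]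
  -- posterior
  set β : 𝒜 → ℝ := fun a => r (true, a) / q a with hβdef
  have hβmem : ∀ a, β a ∈ Set.Icc (0:ℝ) 1 := by
    intro a
    constructor
    · exact div_nonneg (hr0 _) (hq0 _)
    · rcases eq_or_lt_of_le (hq0 a) with h | h
      · rw [hβdef]; dsimp only; rw [← h, div_zero]; norm_num
      · rw [hβdef]; dsimp only; rw [div_le_one h]
        have := hq_eval a
        linarith [hr0 (false, a)]
  -- conditional entropy of X given A
  have hcond : condEnt s = ∑ a, q a * binEnt (binConv (β a) ρ) := by
    rw [show condEnt s = ent s - ent (pushPMF s Prod.snd) from rfl, cond_ent_rows s hs0]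
    apply Finset.sum_congr rfl
    intro a _
    rw [← hq_eval' a]
    rcases eq_or_lt_of_le (hq0 a) with h | h
    · rw [← h]; ring
    · congr 1
      have hst : s (true, a) = ρ * r (false, a) + (1-ρ) * r (true, a) := by
        rw [hs_eval]; simp [bern]
      have hrf : r (false, a) = q a - r (true, a) := by linarith [hq_eval a]
      rw [hβdef]; dsimp only
      unfold binConv
      rw [hst, hrf]
      field_simp
      ring
  -- mutual information of V and A
  have hrows : ent r - ent (pushPMF r Prod.snd) = ∑ a, q a * binEnt (β a) := by
    rw [cond_ent_rows r hr0]
    apply Finset.sum_congr rfl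
    intro a _
    rw [← hq_eval a]
  have hentV : ent (pushPMF r Prod.fst) = 1 := by
    have h : pushPMF r Prod.fst = fun _ => (1/2 : ℝ) := funext hrV
    rw [h]
    unfold ent
    rw [Fintype.sum_bool]
    have hlb : Real.logb 2 (1/2) = -1 := by
      rw [show (1/2:ℝ) = 2⁻¹ by norm_num, Real.logb_inv,
        Real.logb_self_eq_one (by norm_num)]
    rw [hlb]
    norm_num
  have hmut : mutInfo r = 1 - ∑ a, q a * binEnt (β a) := by
    rw [show mutInfo r = ent (pushPMF r Prod.fst) + ent (pushPMF r Prod.snd) - ent r from rfl]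
    rw [hentV]
    linarith [hrows]
  have hlog2 : (0:ℝ) < Real.log 2 := Real.log_pos (by norm_num)
  -- split on ρ
  rcases eq_or_lt_of_le hρ2 with hhalf | hρ2'
  · -- ρ = 1/2
    subst hhalf
    have hc12 : ∀ b : ℝ, binConv b (1/2) = 1/2 := by intro b; unfold binConv; ring
    have hbe12 : binEnt (1/2 : ℝ) = 1 := by
      rw [binEnt_eq, show (1/2:ℝ) = 2⁻¹ by norm_num, binEntropy_two_inv,
        div_self (ne_of_gt hlog2)]
    refine ⟨1/2, by norm_num, le_refl _, ?_, ?_⟩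
    · rw [hcond, hc12, hbe12]
      calc ∑ a, q a * binEnt (binConv (β a) (1/2))
          = ∑ a, q a * 1 := by
            apply Finset.sum_congr rfl
            intro a _
            rw [hc12, hbe12]
        _ = 1 := by rw [← Finset.sum_mul, hqsum, one_mul]
    · rw [hmut, hbe12]
      have : ∑ a, q a * binEnt (β a) ≤ 1 := by
        calc ∑ a, q a * binEnt (β a) ≤ ∑ a, q a * 1 :=
              Finset.sum_le_sum (fun a _ => mul_le_mul_of_nonneg_left binEnt_le_one (hq0 a))
          _ = 1 := by rw [← Finset.sum_mul, hqsum, one_mul]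
      linarith
  · -- ρ < 1/2
    set S := ∑ a, q a * binEntropy (binConv (β a) ρ) with hS
    have hSlb : binEntropy ρ ≤ S := by
      calc binEntropy ρ = ∑ a, q a * binEntropy ρ := by rw [← Finset.sum_mul, hqsum, one_mul]
        _ ≤ S := Finset.sum_le_sum (fun a _ =>
            mul_le_mul_of_nonneg_left (conv_entropy_lb hρ0 hρ2 (hβmem a)) (hq0 a))
    have hSub : S ≤ Real.log 2 := by
      calc S ≤ ∑ a, q a * Real.log 2 := Finset.sum_le_sum (fun a _ =>
            mul_le_mul_of_nonneg_left binEntropy_le_log_two (hq0 a))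
        _ = Real.log 2 := by rw [← Finset.sum_mul, hqsum, one_mul]
    obtain ⟨α, hαmem, hαval⟩ : ∃ α ∈ Set.Icc (0:ℝ) (1/2), binEntropy (binConv α ρ) = S := by
      have hcont : ContinuousOn (fun t => binEntropy (binConv t ρ)) (Set.Icc 0 (1/2)) :=
        (binEntropy_continuous.comp (by unfold binConv; fun_prop)).continuousOn
      have him := intermediate_value_Icc (by norm_num : (0:ℝ) ≤ 1/2) hcont
      have hmem : S ∈ Set.Icc ((fun t => binEntropy (binConv t ρ)) 0)
          ((fun t => binEntropy (binConv t ρ)) (1/2)) := by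
        constructor
        · show binEntropy (binConv 0 ρ) ≤ S
          rw [show binConv 0 ρ = ρ by unfold binConv; ring]
          exact hSlb
        · show S ≤ binEntropy (binConv (1/2) ρ)
          rw [show binConv (1/2 : ℝ) ρ = 1/2 by unfold binConv; ring,
            show ((1:ℝ)/2) = 2⁻¹ by norm_num, binEntropy_two_inv]
          exact hSub
      obtain ⟨α, hα1, hα2⟩ := him hmem
      exact ⟨α, hα1, hα2⟩
    have hsum_div : ∀ (g : 𝒜 → ℝ), ∑ a, q a * binEnt (g a)
        = (∑ a, q a * binEntropy (g a)) / Real.log 2 := by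
      intro g
      rw [Finset.sum_div]
      apply Finset.sum_congr rfl
      intro a _
      rw [binEnt_eq]
      ring
    refine ⟨α, hαmem.1, hαmem.2, ?_, ?_⟩
    · rw [hcond, hsum_div, ← hS, hαval.symm, binEnt_eq]
    · rw [hmut]
      have hmgl := mgl_sum hρ0 hρ2' hαmem.1 hαmem.2 q β hq0 hqsum hβmem (by rw [← hS, hαval])
      have hβsum : ∑ a, q a * binEnt (β a) ≤ binEnt α := by
        rw [hsum_div, binEnt_eq]
        exact (div_le_div_iff_of_pos_right hlog2).mpr hmgl
      linarith

end MainProof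
end

section
/- Markov chain in the Mode 2 converse (step e): Let {(X_i, Y_i, V_i)}_{i=1}^n be i.i.d. copies of a finite-valued tuple (X,Y,V), and let M := f(V_1,…,V_n) for an arbitrary function f. Then for each i = 1,…,n, the Markov chain X_i ↔ (M, V_1^{i−1}, Y_1^n) ↔ X_1^{i−1} holds; that is, X_i is conditionally independent of (X_1,…,X_{i−1}) given (M, V_1,…,V_{i−1}, Y_1,…,Y_n). In particular this follows from the Markov chain (X_i, M, Y_i^n) ↔ V_1^{i−1} ↔ (X_1^{i−1}, Y_1^{i−1}), which also holds. -/
open scoped Classical BigOperators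

section IID

variable {𝒳 𝒴 𝒱 ℳ : Type} [Fintype 𝒳] [Fintype 𝒴] [Fintype 𝒱] [Fintype ℳ]

/-- The i.i.d. pmf of `n` copies of the single-letter source `p` on `𝒳 × 𝒴 × 𝒱`. -/
noncomputable def iidPMF (p : 𝒳 × 𝒴 × 𝒱 → ℝ) (n : ℕ) : (Fin n → 𝒳 × 𝒴 × 𝒱) → ℝ :=
  fun s => ∏ i, p (s i)


noncomputable def ind (P : Prop) : ℝ := if P then 1 else 0

lemma ite_eq_ind {P : Prop} {dP : Decidable P} (x : ℝ) : (@ite _ P dP x 0) = ind P * x := by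
  unfold ind
  rcases dP with hP | hP
  · rw [if_neg hP, if_neg hP, zero_mul]
  · rw [if_pos hP, if_pos hP, one_mul]

lemma ind_congr {P Q : Prop} (h : P ↔ Q) : ind P = ind Q := congrArg ind (propext h)

lemma ind_and (P Q : Prop) : ind (P ∧ Q) = ind P * ind Q := by
  unfold ind
  by_cases hP : P <;> by_cases hQ : Q <;> simp [hP, hQ]

lemma ind_true_of (P : Prop) (h : P) : ind P = 1 := by unfold ind; rw [if_pos h]

lemma push_eq_sum_ind {α β : Type*} [Fintype α] (p : α → ℝ) (f : α → β) (x : β) :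
    pushPMF p f x = ∑ a, ind (f a = x) * p a :=
  Finset.sum_congr rfl fun a _ => ite_eq_ind (p a)

lemma sum_ind_eq {β : Type*} [Fintype β] (b : β) : ∑ b' : β, ind (b = b') = 1 := by
  rw [Finset.sum_eq_single b
    (fun x _ hx => by unfold ind; rw [if_neg (fun hh : b = x => hx hh.symm)])
    (fun hmem => absurd (Finset.mem_univ _) hmem), ind_true_of _ rfl]

lemma markov_rect {Ω₁ Ω₂ β γ δ : Type*} [Fintype Ω₁] [Fintype Ω₂] [Fintype β]
    (p : Ω₁ × Ω₂ → ℝ) (p₁ : Ω₁ → ℝ) (p₂ : Ω₂ → ℝ)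
    (hp : ∀ ω, p ω = p₁ ω.1 * p₂ ω.2)
    (B : Ω₁ × Ω₂ → β) (C : Ω₁ × Ω₂ → γ) (D : Ω₁ × Ω₂ → δ) (D₀ : Ω₁ → δ)
    (hD : ∀ ω, D ω = D₀ ω.1)
    (χ₁ : γ → Ω₁ → Prop) (χ₂ : β → γ → Ω₂ → Prop)
    (h : ∀ b c ω, (B ω = b ∧ C ω = c) ↔ (χ₁ c ω.1 ∧ χ₂ b c ω.2)) :
    MarkovChain p B C D := by
  intro b c d
  set A : ℝ := ∑ ω₁, ind (χ₁ c ω₁ ∧ D₀ ω₁ = d) * p₁ ω₁ with hA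
  set A' : ℝ := ∑ ω₁, ind (χ₁ c ω₁) * p₁ ω₁ with hA'
  set W : β → ℝ := fun b' => ∑ ω₂, ind (χ₂ b' c ω₂) * p₂ ω₂ with hW
  have key3 : ∀ (b' : β) (ω : Ω₁ × Ω₂),
      ind (B ω = b' ∧ C ω = c ∧ D₀ ω.1 = d) * p ω
        = (ind (χ₁ c ω.1 ∧ D₀ ω.1 = d) * p₁ ω.1) * (ind (χ₂ b' c ω.2) * p₂ ω.2) := by
    intro b' ω
    have hiff : (B ω = b' ∧ C ω = c ∧ D₀ ω.1 = d)
        ↔ ((χ₁ c ω.1 ∧ D₀ ω.1 = d) ∧ χ₂ b' c ω.2) := by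
      rw [← and_assoc, h b' c ω]
      constructor
      · rintro ⟨⟨h1, h2⟩, h3⟩; exact ⟨⟨h1, h3⟩, h2⟩
      · rintro ⟨⟨h1, h3⟩, h2⟩; exact ⟨⟨h1, h2⟩, h3⟩
    rw [ind_congr hiff, ind_and, hp ω]; ring
  have key2 : ∀ (b' : β) (ω : Ω₁ × Ω₂),
      ind (B ω = b' ∧ C ω = c) * p ω
        = (ind (χ₁ c ω.1) * p₁ ω.1) * (ind (χ₂ b' c ω.2) * p₂ ω.2) := by
    intro b' ω
    rw [ind_congr (h b' c ω), ind_and, hp ω]; ring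
  have fact3 : ∀ b' : β,
      (∑ ω : Ω₁ × Ω₂, ind (B ω = b' ∧ C ω = c ∧ D₀ ω.1 = d) * p ω) = A * W b' := by
    intro b'
    rw [Finset.sum_congr rfl fun ω _ => key3 b' ω, Fintype.sum_prod_type, hA, hW,
      Finset.sum_mul_sum]
  have fact2 : ∀ b' : β,
      (∑ ω : Ω₁ × Ω₂, ind (B ω = b' ∧ C ω = c) * p ω) = A' * W b' := by
    intro b'
    rw [Finset.sum_congr rfl fun ω _ => key2 b' ω, Fintype.sum_prod_type, hA', hW,
      Finset.sum_mul_sum]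
  have split : ∀ (Q : Prop) (ω : Ω₁ × Ω₂),
      ind Q * p ω = ∑ b' : β, ind (B ω = b' ∧ Q) * p ω := by
    intro Q ω
    rw [Finset.sum_congr rfl fun b' _ => by rw [ind_and (B ω = b') Q],
      ← Finset.sum_mul, ← Finset.sum_mul, sum_ind_eq (B ω), one_mul]
  have h1 : pushPMF p (fun ω => (B ω, C ω, D ω)) (b, c, d) = A * W b := by
    rw [push_eq_sum_ind, ← fact3 b]
    refine Finset.sum_congr rfl fun ω _ => ?_
    rw [ind_congr (show ((B ω, C ω, D ω) = (b, c, d)) ↔ (B ω = b ∧ C ω = c ∧ D₀ ω.1 = d) by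
      simp [Prod.ext_iff, hD ω])]
  have h3 : pushPMF p (fun ω => (B ω, C ω)) (b, c) = A' * W b := by
    rw [push_eq_sum_ind, ← fact2 b]
    refine Finset.sum_congr rfl fun ω _ => ?_
    rw [ind_congr (show ((B ω, C ω) = (b, c)) ↔ (B ω = b ∧ C ω = c) by simp [Prod.ext_iff])]
  have h2 : pushPMF p C c = A' * ∑ b', W b' := by
    rw [push_eq_sum_ind, Finset.sum_congr rfl fun ω _ => split (C ω = c) ω,
      Finset.sum_comm, Finset.sum_congr rfl fun b' _ => fact2 b', ← Finset.mul_sum]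
  have h4 : pushPMF p (fun ω => (C ω, D ω)) (c, d) = A * ∑ b', W b' := by
    rw [push_eq_sum_ind,
      Finset.sum_congr rfl fun ω _ => (by
        rw [ind_congr (show ((C ω, D ω) = (c, d)) ↔ (C ω = c ∧ D₀ ω.1 = d) by
          simp [Prod.ext_iff, hD ω]), split (C ω = c ∧ D₀ ω.1 = d) ω] :
        ind ((fun ω => (C ω, D ω)) ω = (c, d)) * p ω
          = ∑ b' : β, ind (B ω = b' ∧ C ω = c ∧ D₀ ω.1 = d) * p ω),
      Finset.sum_comm, Finset.sum_congr rfl fun b' _ => fact3 b', ← Finset.mul_sum]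
  rw [h1, h2, h3, h4]; ring

lemma markov_equiv {Ω Ω' β γ δ : Type} [Fintype Ω] [Fintype Ω'] (e : Ω ≃ Ω')
    (p : Ω → ℝ) (B : Ω → β) (C : Ω → γ) (D : Ω → δ)
    (h : MarkovChain (fun ω' => p (e.symm ω')) (fun ω' => B (e.symm ω'))
      (fun ω' => C (e.symm ω')) (fun ω' => D (e.symm ω'))) :
    MarkovChain p B C D := by
  intro b c d
  have key : ∀ {ε : Type} (F : Ω → ε) (x : ε),
      pushPMF p F x = pushPMF (fun ω' => p (e.symm ω')) (fun ω' => F (e.symm ω')) x :=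
    fun F x => (Equiv.sum_comp e.symm fun ω => if F ω = x then p ω else 0).symm
  rw [key (fun ω => (B ω, C ω, D ω)) (b, c, d), key C c, key (fun ω => (B ω, C ω)) (b, c),
    key (fun ω => (C ω, D ω)) (c, d)]
  exact h b c d

/-- Markov chain in the Mode 2 converse, step e: for i.i.d.
`{(X_i,Y_i,V_i)}` and `M := f(V_1,…,V_n)`, the Markov chains
`X_i ↔ (M, V_1^{i−1}, Y_1^n) ↔ X_1^{i−1}` and
`(X_i, M, Y_i^n) ↔ V_1^{i−1} ↔ (X_1^{i−1}, Y_1^{i−1})` hold for each `i`. -/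
theorem mode2_converse_markov_step_e
    (p : 𝒳 × 𝒴 × 𝒱 → ℝ) (hp : IsPMF p) (n : ℕ)
    (f : (Fin n → 𝒱) → ℳ) :
    ∀ i : Fin n,
      MarkovChain (iidPMF p n)
        (fun s => (s i).1)
        (fun s => (f (fun j => (s j).2.2),
          fun j : Fin n => if (j : ℕ) < (i : ℕ) then some ((s j).2.2) else none,
          fun j : Fin n => (s j).2.1))
        (fun s => fun j : Fin n => if (j : ℕ) < (i : ℕ) then some ((s j).1) else none) ∧
      MarkovChain (iidPMF p n)
        (fun s => ((s i).1, f (fun j => (s j).2.2),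
          fun j : Fin n => if (i : ℕ) ≤ (j : ℕ) then some ((s j).2.1) else none))
        (fun s => fun j : Fin n => if (j : ℕ) < (i : ℕ) then some ((s j).2.2) else none)
        (fun s => (fun j : Fin n => if (j : ℕ) < (i : ℕ) then some ((s j).1) else none,
          fun j : Fin n => if (j : ℕ) < (i : ℕ) then some ((s j).2.1) else none)) := by
  intro i
  have hi : ¬ ((i : ℕ) < (i : ℕ)) := lt_irrefl _
  let e := Equiv.piEquivPiSubtypeProd (fun j : Fin n => (j : ℕ) < (i : ℕ)) (fun _ => 𝒳 × 𝒴 × 𝒱)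
  have hs1 : ∀ (ω : (∀ _ : {j : Fin n // (j : ℕ) < (i : ℕ)}, 𝒳 × 𝒴 × 𝒱) ×
      (∀ _ : {j : Fin n // ¬ (j : ℕ) < (i : ℕ)}, 𝒳 × 𝒴 × 𝒱)) (j : Fin n) (hj : (j : ℕ) < (i : ℕ)),
      e.symm ω j = ω.1 ⟨j, hj⟩ := by
    intro ω j hj
    rw [Equiv.piEquivPiSubtypeProd_symm_apply, dif_pos hj]
  have hs2 : ∀ (ω : (∀ _ : {j : Fin n // (j : ℕ) < (i : ℕ)}, 𝒳 × 𝒴 × 𝒱) ×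
      (∀ _ : {j : Fin n // ¬ (j : ℕ) < (i : ℕ)}, 𝒳 × 𝒴 × 𝒱)) (j : Fin n) (hj : ¬ (j : ℕ) < (i : ℕ)),
      e.symm ω j = ω.2 ⟨j, hj⟩ := by
    intro ω j hj
    rw [Equiv.piEquivPiSubtypeProd_symm_apply, dif_neg hj]
  set p₁ : (∀ _ : {j : Fin n // (j : ℕ) < (i : ℕ)}, 𝒳 × 𝒴 × 𝒱) → ℝ :=
    fun ω₁ => ∏ j : {j : Fin n // (j : ℕ) < (i : ℕ)}, p (ω₁ j) with hp₁
  set p₂ : (∀ _ : {j : Fin n // ¬ (j : ℕ) < (i : ℕ)}, 𝒳 × 𝒴 × 𝒱) → ℝ :=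
    fun ω₂ => ∏ j : {j : Fin n // ¬ (j : ℕ) < (i : ℕ)}, p (ω₂ j) with hp₂
  have hprod : ∀ ω, iidPMF p n (e.symm ω) = p₁ ω.1 * p₂ ω.2 := by
    intro ω
    rw [hp₁, hp₂]
    show ∏ j, p (e.symm ω j) = _
    rw [← Fintype.prod_subtype_mul_prod_subtype (fun j : Fin n => (j : ℕ) < (i : ℕ))
      (fun j => p (e.symm ω j))]
    refine congrArg₂ (· * ·) (Finset.prod_congr rfl fun j _ => ?_)
      (Finset.prod_congr rfl fun j _ => ?_)
    · rw [hs1 ω j.1 j.2]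
    · rw [hs2 ω j.1 j.2]
  constructor
  · -- first Markov chain
    refine markov_equiv e _ _ _ _
      (markov_rect _ p₁ p₂ hprod
        (fun ω' => (e.symm ω' i).1)
        (fun ω' => (f (fun j => (e.symm ω' j).2.2),
          fun j : Fin n => if (j : ℕ) < (i : ℕ) then some ((e.symm ω' j).2.2) else none,
          fun j : Fin n => (e.symm ω' j).2.1))
        (fun ω' => fun j : Fin n =>
          if (j : ℕ) < (i : ℕ) then some ((e.symm ω' j).1) else none)
        (fun ω₁ => fun j : Fin n =>
          if hj : (j : ℕ) < (i : ℕ) then some ((ω₁ ⟨j, hj⟩).1) else none)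
        ?_
        (fun c ω₁ =>
          (∀ j : {j : Fin n // (j : ℕ) < (i : ℕ)}, c.2.1 j.1 = some ((ω₁ j).2.2)) ∧
          (∀ j : {j : Fin n // (j : ℕ) < (i : ℕ)}, c.2.2 j.1 = (ω₁ j).2.1))
        (fun b c ω₂ =>
          b = (ω₂ ⟨i, hi⟩).1 ∧
          (∀ j : {j : Fin n // ¬ (j : ℕ) < (i : ℕ)}, c.2.1 j.1 = none) ∧
          (∀ j : {j : Fin n // ¬ (j : ℕ) < (i : ℕ)}, c.2.2 j.1 = (ω₂ j).2.1) ∧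
          ∃ v : Fin n → 𝒱, (∀ (j : Fin n), (j : ℕ) < (i : ℕ) → c.2.1 j = some (v j)) ∧
            f (fun j => if hj : (j : ℕ) < (i : ℕ) then v j else (ω₂ ⟨j, hj⟩).2.2) = c.1)
        ?_)
    · intro ω
      funext j
      by_cases hj : (j : ℕ) < (i : ℕ)
      · rw [if_pos hj, dif_pos hj, hs1 ω j hj]
      · rw [if_neg hj, dif_neg hj]
    · rintro b ⟨m, vo, yo⟩ ω
      constructor
      · rintro ⟨hB, hC⟩
        try dsimp only at hB hC
        rw [Prod.mk.injEq, Prod.mk.injEq] at hC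
        obtain ⟨hm, hvo, hyo⟩ := hC
        try dsimp only at hm hvo hyo
        refine ⟨⟨fun j => ?_, fun j => ?_⟩, ?_, fun j => ?_, fun j => ?_,
          ⟨fun j => (e.symm ω j).2.2, fun j hj => ?_, ?_⟩⟩
        · simp only [← hvo]; rw [if_pos j.2, hs1 ω j.1 j.2]
        · simp only [← hyo]; rw [hs1 ω j.1 j.2]
        · rw [← hB]
          exact congrArg (fun t => t.1) (hs2 ω i hi)
        · simp only [← hvo]; rw [if_neg j.2]
        · simp only [← hyo]; rw [hs2 ω j.1 j.2]
        · simp only [← hvo]; rw [if_pos hj]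
        · rw [← hm]
          congr 1
          funext j
          by_cases hj : (j : ℕ) < (i : ℕ)
          · rw [dif_pos hj]
          · rw [dif_neg hj, hs2 ω j hj]
      · rintro ⟨⟨hv1, hy1⟩, hb, hv2, hy2, v, hv, hf⟩
        try dsimp only at hv1 hy1 hb hv2 hy2 hv hf
        refine ⟨?_, ?_⟩
        · try dsimp only
          rw [hs2 ω i hi]; exact hb.symm
        · try dsimp only
          rw [Prod.mk.injEq, Prod.mk.injEq]
          refine ⟨?_, ?_, ?_⟩
          · rw [← hf]
            congr 1
            funext j
            by_cases hj : (j : ℕ) < (i : ℕ)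
            · rw [dif_pos hj, hs1 ω j hj]
              exact Option.some.inj ((hv1 ⟨j, hj⟩).symm.trans (hv j hj))
            · rw [dif_neg hj, hs2 ω j hj]
          · funext j
            by_cases hj : (j : ℕ) < (i : ℕ)
            · rw [if_pos hj, hs1 ω j hj]; exact (hv1 ⟨j, hj⟩).symm
            · rw [if_neg hj]; exact (hv2 ⟨j, hj⟩).symm
          · funext j
            by_cases hj : (j : ℕ) < (i : ℕ)
            · rw [hs1 ω j hj]; exact (hy1 ⟨j, hj⟩).symm
            · rw [hs2 ω j hj]; exact (hy2 ⟨j, hj⟩).symm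
  · -- second Markov chain
    refine markov_equiv e _ _ _ _
      (markov_rect _ p₁ p₂ hprod
        (fun ω' => ((e.symm ω' i).1, f (fun j => (e.symm ω' j).2.2),
          fun j : Fin n => if (i : ℕ) ≤ (j : ℕ) then some ((e.symm ω' j).2.1) else none))
        (fun ω' => fun j : Fin n =>
          if (j : ℕ) < (i : ℕ) then some ((e.symm ω' j).2.2) else none)
        (fun ω' => (fun j : Fin n =>
            if (j : ℕ) < (i : ℕ) then some ((e.symm ω' j).1) else none,
          fun j : Fin n => if (j : ℕ) < (i : ℕ) then some ((e.symm ω' j).2.1) else none))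
        (fun ω₁ =>
          (fun j : Fin n =>
            if hj : (j : ℕ) < (i : ℕ) then some ((ω₁ ⟨j, hj⟩).1) else none,
           fun j : Fin n =>
            if hj : (j : ℕ) < (i : ℕ) then some ((ω₁ ⟨j, hj⟩).2.1) else none))
        ?_
        (fun c ω₁ => ∀ j : Fin n,
          c j = if hj : (j : ℕ) < (i : ℕ) then some ((ω₁ ⟨j, hj⟩).2.2) else none)
        (fun b c ω₂ =>
          b.1 = (ω₂ ⟨i, hi⟩).1 ∧
          (∀ j : Fin n,
            b.2.2 j = if hj : ¬ (j : ℕ) < (i : ℕ) then some ((ω₂ ⟨j, hj⟩).2.1) else none) ∧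
          ∃ v : Fin n → 𝒱, (∀ (j : Fin n), (j : ℕ) < (i : ℕ) → c j = some (v j)) ∧
            f (fun j => if hj : (j : ℕ) < (i : ℕ) then v j else (ω₂ ⟨j, hj⟩).2.2) = b.2.1)
        ?_)
    · intro ω
      rw [Prod.mk.injEq]
      constructor <;> (funext j; by_cases hj : (j : ℕ) < (i : ℕ))
      · rw [if_pos hj, dif_pos hj, hs1 ω j hj]
      · rw [if_neg hj, dif_neg hj]
      · rw [if_pos hj, dif_pos hj, hs1 ω j hj]
      · rw [if_neg hj, dif_neg hj]
    · rintro ⟨x, m, yo⟩ c ω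
      constructor
      · rintro ⟨hB, hC⟩
        try dsimp only at hB hC
        rw [Prod.mk.injEq, Prod.mk.injEq] at hB
        obtain ⟨hx, hm, hyo⟩ := hB
        try dsimp only at hx hm hyo
        refine ⟨fun j => ?_, ?_, fun j => ?_,
          ⟨fun j => (e.symm ω j).2.2, fun j hj => ?_, ?_⟩⟩
        · simp only [← hC]
          by_cases hj : (j : ℕ) < (i : ℕ)
          · rw [if_pos hj, dif_pos hj, hs1 ω j hj]
          · rw [if_neg hj, dif_neg hj]
        · rw [← hx, hs2 ω i hi]
        · simp only [← hyo]
          by_cases hj : (j : ℕ) < (i : ℕ)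
          · rw [if_neg (not_le.mpr hj), dif_neg (not_not_intro hj)]
          · rw [if_pos (Nat.le_of_not_lt hj), dif_pos hj, hs2 ω j hj]
        · simp only [← hC]; rw [if_pos hj]
        · rw [← hm]
          congr 1
          funext j
          by_cases hj : (j : ℕ) < (i : ℕ)
          · rw [dif_pos hj]
          · rw [dif_neg hj, hs2 ω j hj]
      · rintro ⟨h1, hx, hyo, v, hv, hf⟩
        try dsimp only at h1 hx hyo hv hf
        refine ⟨?_, ?_⟩
        · try dsimp only
          rw [Prod.mk.injEq, Prod.mk.injEq]
          refine ⟨?_, ?_, ?_⟩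
          · rw [hs2 ω i hi]; exact hx.symm
          · rw [← hf]
            congr 1
            funext j
            by_cases hj : (j : ℕ) < (i : ℕ)
            · rw [dif_pos hj, hs1 ω j hj]
              have h1j := h1 j
              rw [dif_pos hj] at h1j
              exact Option.some.inj (h1j.symm.trans (hv j hj))
            · rw [dif_neg hj, hs2 ω j hj]
          · funext j
            by_cases hj : (j : ℕ) < (i : ℕ)
            · rw [if_neg (not_le.mpr hj), hyo j, dif_neg (not_not_intro hj)]
            · rw [if_pos (Nat.le_of_not_lt hj), hs2 ω j hj, hyo j, dif_pos hj]
        · funext j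
          try dsimp only
          by_cases hj : (j : ℕ) < (i : ℕ)
          · rw [if_pos hj, h1 j, dif_pos hj, hs1 ω j hj]
          · rw [if_neg hj, h1 j, dif_neg hj]


end IID
end

section
/- Markov chain for the auxiliary variable in the Mode 2 converse: Let {(X_i, Y_i, V_i)}_{i=1}^n be i.i.d. copies of a finite-valued tuple (X,Y,V), let M := f(V_1,…,V_n) for an arbitrary function f, and define A_i := (M, Y_1^{i−1}, Y_{i+1}^n, V_1^{i−1}). Then for each i = 1,…,n the Markov chain (X_i, Y_i) ↔ V_i ↔ A_i holds; that is, (X_i,Y_i) is conditionally independent of A_i given V_i. -/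
open scoped Classical BigOperators

section IID

variable {𝒳 𝒴 𝒱 ℳ : Type} [Fintype 𝒳] [Fintype 𝒴] [Fintype 𝒱] [Fintype ℳ]

/-- Markov chain for the auxiliary variable in the Mode 2 converse: for
i.i.d. `{(X_i,Y_i,V_i)}`, `M := f(V_1,…,V_n)` and
`A_i := (M, Y_1^{i−1}, Y_{i+1}^n, V_1^{i−1})`, the Markov chain `(X_i,Y_i) ↔ V_i ↔ A_i`
holds for each `i`. -/
theorem mode2_converse_aux_markov
    (p : 𝒳 × 𝒴 × 𝒱 → ℝ) (hp : IsPMF p) (n : ℕ)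
    (f : (Fin n → 𝒱) → ℳ) :
    ∀ i : Fin n,
      MarkovChain (iidPMF p n)
        (fun s => ((s i).1, (s i).2.1))
        (fun s => (s i).2.2)
        (fun s => (f (fun j => (s j).2.2),
          fun j : Fin n => if (j : ℕ) < (i : ℕ) then some ((s j).2.1) else none,
          fun j : Fin n => if (i : ℕ) < (j : ℕ) then some ((s j).2.1) else none,
          fun j : Fin n => if (j : ℕ) < (i : ℕ) then some ((s j).2.2) else none)) := by
  classical
  intro i
  unfold MarkovChain
  intro b c d
  set sub := { j : Fin n // j ≠ i } with hsub
  set res : (Fin n → 𝒳 × 𝒴 × 𝒱) → sub → 𝒳 × 𝒴 × 𝒱 := fun s j => s j.1 with hres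
  set G : 𝒱 → (sub → 𝒳 × 𝒴 × 𝒱) →
      ℳ × (Fin n → Option 𝒴) × (Fin n → Option 𝒴) × (Fin n → Option 𝒱) := fun v t =>
    (f (fun j => if h : j = i then v else (t ⟨j, h⟩).2.2),
     fun j => if h : (j : ℕ) < (i : ℕ) then some ((t ⟨j, Fin.ne_of_val_ne h.ne⟩).2.1) else none,
     fun j => if h : (i : ℕ) < (j : ℕ) then some ((t ⟨j, Fin.ne_of_val_ne h.ne'⟩).2.1) else none,
     fun j => if h : (j : ℕ) < (i : ℕ) then some ((t ⟨j, Fin.ne_of_val_ne h.ne⟩).2.2) else none)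
    with hG
  -- the auxiliary variable is a function of `V_i` and the other coordinates only
  have hD : ∀ s : Fin n → 𝒳 × 𝒴 × 𝒱,
      ((f (fun j => (s j).2.2),
        fun j : Fin n => if (j : ℕ) < (i : ℕ) then some ((s j).2.1) else none,
        fun j : Fin n => if (i : ℕ) < (j : ℕ) then some ((s j).2.1) else none,
        fun j : Fin n => if (j : ℕ) < (i : ℕ) then some ((s j).2.2) else none)
        : ℳ × (Fin n → Option 𝒴) × (Fin n → Option 𝒴) × (Fin n → Option 𝒱))
        = G ((s i).2.2) (res s) := by
    intro s
    simp only [hG, hres]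
    refine Prod.ext ?_ (Prod.ext ?_ (Prod.ext ?_ ?_))
    · dsimp only
      congr 1
      funext j
      by_cases h : j = i
      · subst h; simp
      · simp [h]
    · dsimp only; funext j; split <;> rfl
    · dsimp only; funext j; split <;> rfl
    · dsimp only; funext j; split <;> rfl
  -- splitting a sum over all tuples into coordinate `i` and the rest
  have hsplit : ∀ (u : 𝒳 × 𝒴 × 𝒱 → ℝ) (w : (sub → 𝒳 × 𝒴 × 𝒱) → ℝ),
      (∑ s : Fin n → 𝒳 × 𝒴 × 𝒱, u (s i) * w (res s))
        = (∑ a, u a) * (∑ t : sub → 𝒳 × 𝒴 × 𝒱, w t) := by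
    intro u w
    calc (∑ s : Fin n → 𝒳 × 𝒴 × 𝒱, u (s i) * w (res s))
        = ∑ x : (𝒳 × 𝒴 × 𝒱) × (sub → 𝒳 × 𝒴 × 𝒱), u x.1 * w x.2 :=
          Fintype.sum_equiv (Equiv.piSplitAt i fun _ => 𝒳 × 𝒴 × 𝒱) _ _ (fun s => rfl)
      _ = (∑ a, u a) * (∑ t : sub → 𝒳 × 𝒴 × 𝒱, w t) := by
          rw [Fintype.sum_prod_type, ← Finset.sum_mul_sum]
  -- splitting the iid product
  have hprod : ∀ s : Fin n → 𝒳 × 𝒴 × 𝒱,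
      iidPMF p n s = p (s i) * ∏ j : sub, p (res s j) := by
    intro s
    unfold iidPMF
    rw [Fintype.prod_eq_mul_prod_compl i]
    congr 1
    exact Finset.prod_subtype _ (by simp) _
  -- the four marginals
  have h1 : pushPMF (iidPMF p n)
      (fun s => (((s i).1, (s i).2.1), (s i).2.2,
        (f (fun j => (s j).2.2),
          fun j : Fin n => if (j : ℕ) < (i : ℕ) then some ((s j).2.1) else none,
          fun j : Fin n => if (i : ℕ) < (j : ℕ) then some ((s j).2.1) else none,
          fun j : Fin n => if (j : ℕ) < (i : ℕ) then some ((s j).2.2) else none))) (b, c, d)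
      = (∑ a : 𝒳 × 𝒴 × 𝒱, if (a.1, a.2.1) = b ∧ a.2.2 = c then p a else 0)
        * (∑ t : sub → 𝒳 × 𝒴 × 𝒱, if G c t = d then ∏ j : sub, p (t j) else 0) := by
    rw [← hsplit]
    simp only [pushPMF]
    refine Finset.sum_congr rfl fun s _ => ?_
    simp only [hD, hprod]
    simp only [Prod.mk.injEq]
    by_cases hc : (s i).2.2 = c
    · subst hc
      by_cases hb : ((s i).1, (s i).2.1) = b <;>
        by_cases hdd : G ((s i).2.2) (res s) = d <;>
          simp [hb, hdd, Prod.ext_iff]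
    · simp [hc]
  have h2 : pushPMF (iidPMF p n) (fun s => (s i).2.2) c
      = (∑ a : 𝒳 × 𝒴 × 𝒱, if a.2.2 = c then p a else 0)
        * (∑ t : sub → 𝒳 × 𝒴 × 𝒱, ∏ j : sub, p (t j)) := by
    rw [← hsplit]
    simp only [pushPMF]
    refine Finset.sum_congr rfl fun s _ => ?_
    simp only [hprod]
    by_cases hc : (s i).2.2 = c <;> simp [hc]
  have h3 : pushPMF (iidPMF p n) (fun s => (((s i).1, (s i).2.1), (s i).2.2)) (b, c)
      = (∑ a : 𝒳 × 𝒴 × 𝒱, if (a.1, a.2.1) = b ∧ a.2.2 = c then p a else 0)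
        * (∑ t : sub → 𝒳 × 𝒴 × 𝒱, ∏ j : sub, p (t j)) := by
    rw [← hsplit]
    simp only [pushPMF]
    refine Finset.sum_congr rfl fun s _ => ?_
    simp only [hprod]
    simp only [Prod.mk.injEq]
    by_cases hc : (s i).2.2 = c <;> by_cases hb : ((s i).1, (s i).2.1) = b <;>
      simp [hc, hb, Prod.ext_iff]
  have h4 : pushPMF (iidPMF p n)
      (fun s => ((s i).2.2,
        (f (fun j => (s j).2.2),
          fun j : Fin n => if (j : ℕ) < (i : ℕ) then some ((s j).2.1) else none,
          fun j : Fin n => if (i : ℕ) < (j : ℕ) then some ((s j).2.1) else none,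
          fun j : Fin n => if (j : ℕ) < (i : ℕ) then some ((s j).2.2) else none))) (c, d)
      = (∑ a : 𝒳 × 𝒴 × 𝒱, if a.2.2 = c then p a else 0)
        * (∑ t : sub → 𝒳 × 𝒴 × 𝒱, if G c t = d then ∏ j : sub, p (t j) else 0) := by
    rw [← hsplit]
    simp only [pushPMF]
    refine Finset.sum_congr rfl fun s _ => ?_
    simp only [hD, hprod]
    simp only [Prod.mk.injEq]
    by_cases hc : (s i).2.2 = c
    · subst hc
      by_cases hdd : G ((s i).2.2) (res s) = d <;> simp [hdd, Prod.ext_iff]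
    · simp [hc]
  rw [h1, h2, h3, h4]
  ring

end IID
end
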